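/- Let G = (V, E, (V_□, V_◯, V_△)) be a stochastic game, T = (P, 𝑳, C) a strategy template, W ⊆ V, and let 0 < α < 1 and β ≥ 1 be real parameters. Let σ̂ be the mixed strategy of ParameterizedExtract: after a finite history h ending at an Even vertex u, σ̂ assigns to each successor u' a probability proportional to the weight d(h)(u,u') = α^{c_C(h,(u,u'))} · β^{c_L(h,(u,u'))} among edges (u,u') ∈ E ∖ P, where c_C(h,e) is the number of occurrences of e in h if e ∈ C (and 0 otherwise) and c_L(h,e) is the number of occurrences of e in h if e belongs to some live-group in 𝑳 (and 0 otherwise). Then: (1) for every pure strategy σ̃ such that every edge σ̃ selects lies in E ∖ (P ∪ C), the language L_W(σ̃) is contained in L_W(σ̂), i.e., σ̃ is no more permissive than σ̂; and (2) if moreover there exists a play v ∈ L_W(σ̂) with (v i, v (i+1)) ∈ C for some i, then L_W(σ̃) ⊊ L_W(σ̂), i.e., σ̂ is strictly more permissive than σ̃. (Theorem 7 of the paper.) -/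
import Mathlib


/-- A stochastic game `G = (V, E, (V_□, V_◯, V_△))`: a directed graph on `V` in
which every vertex has at least one outgoing edge, together with a partition of
the vertices into Even (`VE = V_□`), Odd (`VO = V_◯`) and Random (`VR = V_△`). -/
structure SGame (V : Type*) where
  E : Set (V × V)
  VE : Set V
  VO : Set V
  VR : Set V
  serial : ∀ u : V, ∃ w, (u, w) ∈ E
  cover : VE ∪ VO ∪ VR = Set.univ
  dEO : Disjoint VE VO
  dER : Disjoint VE VR
  dOR : Disjoint VO VR

namespace SGame

variable {V : Type*}

/-- `Pre(Y) = {u ∈ V : ∀ w, (u,w) ∈ E → w ∈ Y}`. -/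
def Pre (G : SGame V) (Y : Set V) : Set V := {u | ∀ w, (u, w) ∈ G.E → w ∈ Y}

/-- `Pre_□(Y) = {u ∈ V_□ : ∃ w ∈ Y, (u,w) ∈ E}`. -/
def PreE (G : SGame V) (Y : Set V) : Set V := {u | u ∈ G.VE ∧ ∃ w ∈ Y, (u, w) ∈ G.E}

/-- `Pre_△(Z,Y) = {u ∈ V_△ : (∀ w, (u,w) ∈ E → w ∈ Z) ∧ (∃ w ∈ Y, (u,w) ∈ E)}`. -/
def PreR (G : SGame V) (Z Y : Set V) : Set V :=
  {u | u ∈ G.VR ∧ (∀ w, (u, w) ∈ G.E → w ∈ Z) ∧ ∃ w ∈ Y, (u, w) ∈ G.E}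

lemma Pre_mono (G : SGame V) : Monotone G.Pre :=
  fun _ _ h _ hu w hw => h (hu w hw)

lemma PreE_mono (G : SGame V) : Monotone G.PreE := by
  rintro Y Z h u ⟨h1, w, hw, he⟩
  exact ⟨h1, w, h hw, he⟩

lemma PreR_mono (G : SGame V) {Z Z' Y Y' : Set V} (hZ : Z ⊆ Z') (hY : Y ⊆ Y') :
    G.PreR Z Y ⊆ G.PreR Z' Y' := by
  rintro u ⟨h1, h2, w, hw, he⟩
  exact ⟨h1, fun w hw => hZ (h2 w hw), w, hY hw, he⟩

/-- The monotone map `Y ↦ X ∪ Pre(Y)`. -/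
def attrOp (G : SGame V) (X : Set V) : Set V →o Set V :=
  ⟨fun Y => X ∪ G.Pre Y, fun _ _ h => Set.union_subset_union_right X (G.Pre_mono h)⟩

/-- `Attr(X) = lfp (Y ↦ X ∪ Pre(Y))`. -/
def Attr (G : SGame V) (X : Set V) : Set V := OrderHom.lfp (G.attrOp X)

/-- The monotone map `Y ↦ X ∪ Pre(Y) ∪ Pre_□(Y)`. -/
def attrOpE (G : SGame V) (X : Set V) : Set V →o Set V :=
  ⟨fun Y => X ∪ G.Pre Y ∪ G.PreE Y, fun _ _ h =>
    Set.union_subset_union (Set.union_subset_union_right X (G.Pre_mono h)) (G.PreE_mono h)⟩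

/-- `Attr_□(X) = lfp (Y ↦ X ∪ Pre(Y) ∪ Pre_□(Y))`. -/
def AttrE (G : SGame V) (X : Set V) : Set V := OrderHom.lfp (G.attrOpE X)

/-- The monotone map `Y ↦ X ∪ Pre(Y) ∪ Pre_△(Z,Y)` (for a fixed `Z`). -/
def attrOp' (G : SGame V) (X Z : Set V) : Set V →o Set V :=
  ⟨fun Y => X ∪ G.Pre Y ∪ G.PreR Z Y, fun _ _ h =>
    Set.union_subset_union (Set.union_subset_union_right X (G.Pre_mono h))
      (G.PreR_mono le_rfl h)⟩

/-- The monotone map `Z ↦ lfp (Y ↦ X ∪ Pre(Y) ∪ Pre_△(Z,Y))`. -/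
def attrOuter' (G : SGame V) (X : Set V) : Set V →o Set V :=
  ⟨fun Z => OrderHom.lfp (G.attrOp' X Z), by
    intro Z Z' h
    exact OrderHom.lfp.monotone fun Y =>
      Set.union_subset_union_right _ (G.PreR_mono h le_rfl)⟩

/-- `Attr'(X) = gfp (Z ↦ lfp (Y ↦ X ∪ Pre(Y) ∪ Pre_△(Z,Y)))`. -/
def Attr' (G : SGame V) (X : Set V) : Set V := OrderHom.gfp (G.attrOuter' X)

/-- The monotone map `Y ↦ X ∪ Pre_□(Y) ∪ Pre(Y) ∪ Pre_△(Z,Y)` (for a fixed `Z`). -/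
def attrOpE' (G : SGame V) (X Z : Set V) : Set V →o Set V :=
  ⟨fun Y => X ∪ G.PreE Y ∪ G.Pre Y ∪ G.PreR Z Y, fun _ _ h =>
    Set.union_subset_union
      (Set.union_subset_union (Set.union_subset_union_right X (G.PreE_mono h)) (G.Pre_mono h))
      (G.PreR_mono le_rfl h)⟩

/-- The monotone map `Z ↦ lfp (Y ↦ X ∪ Pre_□(Y) ∪ Pre(Y) ∪ Pre_△(Z,Y))`. -/
def attrOuterE' (G : SGame V) (X : Set V) : Set V →o Set V :=
  ⟨fun Z => OrderHom.lfp (G.attrOpE' X Z), by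
    intro Z Z' h
    exact OrderHom.lfp.monotone fun Y =>
      Set.union_subset_union_right _ (G.PreR_mono h le_rfl)⟩

/-- `Attr'_□(X) = gfp (Z ↦ lfp (Y ↦ X ∪ Pre_□(Y) ∪ Pre(Y) ∪ Pre_△(Z,Y)))`. -/
def AttrE' (G : SGame V) (X : Set V) : Set V := OrderHom.gfp (G.attrOuterE' X)

/-- `Edges_□(X,Y) = {(u,w) ∈ E : u ∈ X ∩ V_□ ∧ w ∈ Y}`. -/
def EdgesE (G : SGame V) (X Y : Set V) : Set (V × V) :=
  {e | e ∈ G.E ∧ e.1 ∈ X ∧ e.1 ∈ G.VE ∧ e.2 ∈ Y}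

/-- A play: an infinite sequence of vertices following the edges of the game. -/
def IsPlay (G : SGame V) (v : ℕ → V) : Prop := ∀ i, (v i, v (i + 1)) ∈ G.E

/-- A play is Random-fair if from every Random vertex occurring infinitely
often, every outgoing edge is taken infinitely often. -/
def RandomFair (G : SGame V) (v : ℕ → V) : Prop :=
  ∀ u ∈ G.VR, {i | v i = u}.Infinite →
    ∀ u', (u, u') ∈ G.E → {i | (v i, v (i + 1)) = (u, u')}.Infinite

/-- The monotone map `Y ↦ X ∩ (Pre_□(Y) ∪ Pre(Y))` of the safety algorithm. -/
def safetyOp (G : SGame V) (X : Set V) : Set V →o Set V :=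
  ⟨fun Y => X ∩ (G.PreE Y ∪ G.Pre Y), fun _ _ h =>
    Set.inter_subset_inter (le_refl X)
      (Set.union_subset_union (G.PreE_mono h) (G.Pre_mono h))⟩

/-- The winning set for the safety objective `□X`:
the greatest fixed point of `Y ↦ X ∩ (Pre_□(Y) ∪ Pre(Y))`. -/
def SafeW (G : SGame V) (X : Set V) : Set V := OrderHom.gfp (G.safetyOp X)

end SGame

open scoped Classical

/-- The number of occurrences of the edge `e` among consecutive pairs of the
finite history `h` (a finite sequence of vertices). -/
noncomputable def edgeCount {V : Type*} (e : V × V) : List V → ℕ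
  | a :: b :: t => (if (a, b) = e then 1 else 0) + edgeCount e (b :: t)
  | _ => 0

/-- The weight `d(h)(e) = α ^ c_C(h,e) · β ^ c_L(h,e)` used by
`ParameterizedExtract`, where `c_C(h,e)` is the number of occurrences of `e` in
`h` if `e ∈ C` (and `0` otherwise), and `c_L(h,e)` is the number of occurrences
of `e` in `h` if `e` belongs to some live-group (i.e. `e ∈ LU`, and `0`
otherwise). -/
noncomputable def pweight {V : Type*} (α β : ℝ) (C LU : Set (V × V))
    (h : List V) (e : V × V) : ℝ :=
  α ^ (if e ∈ C then edgeCount e h else 0) * β ^ (if e ∈ LU then edgeCount e h else 0)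

/-- The mixed strategy `σ̂` of `ParameterizedExtract`: after the history
`h ++ [u]` (prefix `h`, current Even vertex `u`), the probability of moving to
`u'` is the weight of `(u,u')` normalized over all edges `(u,u'') ∈ E ∖ P`
(and `0` for edges outside `E ∖ P`). -/
noncomputable def sigmaHat {V : Type*} [Fintype V] (G : SGame V)
    (P C : Set (V × V)) (Ls : Set (Set (V × V))) (α β : ℝ)
    (h : List V) (u u' : V) : ℝ :=
  if (u, u') ∈ G.E \ P then
    pweight α β C (⋃₀ Ls) (h ++ [u]) (u, u') /
      ∑ w ∈ Finset.univ.filter (fun w => (u, w) ∈ G.E \ P),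
        pweight α β C (⋃₀ Ls) (h ++ [u]) (u, w)
  else 0

/-- The strict prefix `v 0, …, v (i-1)` of a play, as a finite history. -/
def prefixList {V : Type*} (v : ℕ → V) (i : ℕ) : List V :=
  List.ofFn fun j : Fin i => v j

/-- The language `L_W(σ̃)` of a pure strategy `σ̃` (taking the history prefix and
the current Even vertex): plays starting in `W` all of whose Even moves agree
with `σ̃`. -/
def LangPure {V : Type*} (G : SGame V) (W : Set V) (σ : List V → V → V) :
    Set (ℕ → V) :=
  {v | G.IsPlay v ∧ v 0 ∈ W ∧ ∀ i, v i ∈ G.VE → σ (prefixList v i) (v i) = v (i + 1)}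

/-- The language `L_W(σ)` of a mixed strategy `σ` (taking the history prefix,
the current Even vertex and a candidate successor to its probability): plays
starting in `W` all of whose Even moves receive positive probability. -/
def LangMixed {V : Type*} (G : SGame V) (W : Set V) (σ : List V → V → V → ℝ) :
    Set (ℕ → V) :=
  {v | G.IsPlay v ∧ v 0 ∈ W ∧ ∀ i, v i ∈ G.VE → 0 < σ (prefixList v i) (v i) (v (i + 1))}

/-- **Theorem 7**: (1) every pure strategy `σ̃` that always selects edges in
`E ∖ (P ∪ C)` is no more permissive than the mixed strategy `σ̂` of
`ParameterizedExtract`; (2) if moreover some play of `L_W(σ̂)` takes an edge of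
`C`, then `σ̂` is strictly more permissive than `σ̃`. -/
theorem parameterizedExtract_more_permissive {V : Type*} [Fintype V]
    (G : SGame V) (P C : Set (V × V)) (Ls : Set (Set (V × V)))
    -- `T = (P, 𝑳, C)` is a strategy template:
    (hP : P ⊆ {e ∈ G.E | e.1 ∈ G.VE}) (hC : C ⊆ {e ∈ G.E | e.1 ∈ G.VE})
    (hLs : ∀ L ∈ Ls, L ⊆ {e ∈ G.E | e.1 ∈ G.VE}) (hLsfin : Ls.Finite)
    (W : Set V) (α β : ℝ) (hα0 : 0 < α) (hα1 : α < 1) (hβ : 1 ≤ β)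
    (σt : List V → V → V)
    (hσt : ∀ (h : List V) (u : V), u ∈ G.VE → (u, σt h u) ∈ G.E \ (P ∪ C)) :
    LangPure G W σt ⊆ LangMixed G W (sigmaHat G P C Ls α β) ∧
    ((∃ v ∈ LangMixed G W (sigmaHat G P C Ls α β), ∃ i, (v i, v (i + 1)) ∈ C) →
      LangPure G W σt ⊂ LangMixed G W (sigmaHat G P C Ls α β)) := by
  have hβ0 : (0:ℝ) < β := lt_of_lt_of_le one_pos hβ
  have hw : ∀ (h : List V) (e : V × V), 0 < pweight α β C (⋃₀ Ls) h e := fun h e =>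
    mul_pos (pow_pos hα0 _) (pow_pos hβ0 _)
  have key : ∀ (h : List V) (u u' : V), (u, u') ∈ G.E \ P →
      0 < sigmaHat G P C Ls α β h u u' := by
    intro h u u' he
    rw [sigmaHat, if_pos he]
    apply div_pos (hw _ _)
    apply Finset.sum_pos (fun w _ => hw _ _)
    exact ⟨u', Finset.mem_filter.mpr ⟨Finset.mem_univ _, he⟩⟩
  have sub : LangPure G W σt ⊆ LangMixed G W (sigmaHat G P C Ls α β) := by
    rintro v ⟨hp, h0, hs⟩
    refine ⟨hp, h0, fun i hi => ?_⟩
    have h2 := hσt (prefixList v i) (v i) hi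
    rw [hs i hi] at h2
    exact key _ _ _ ⟨h2.1, fun hm => h2.2 (Or.inl hm)⟩
  refine ⟨sub, ?_⟩
  rintro ⟨v, hv, i, hci⟩
  refine ⟨sub, fun hle => ?_⟩
  have hvE : v i ∈ G.VE := (hC hci).2
  have hvp := hle hv
  have h3 := hvp.2.2 i hvE
  have h2 := hσt (prefixList v i) (v i) hvE
  rw [h3] at h2
  exact h2.2 (Or.inr hci)
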